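/- Let R be a graded commutative 2-ring. Then every maximal element of the poset of proper homogeneous ideals of R is a prime homogeneous ideal, and every proper homogeneous ideal of R is contained in some prime homogeneous ideal. -/

import Mathlib

open CategoryTheory CategoryTheory.Limits CategoryTheory.MonoidalCategory

universe w v u v' u' v'' u''

/-- A *graded commutative 2-ring*: an essentially small preadditive symmetric monoidal
category whose tensor product is additive in each variable and in which every object
is invertible for the tensor product. -/
class GradedComm2Ring (C : Type u) [Category.{v} C] [Preadditive C] [MonoidalCategory C]
    [SymmetricCategory C] [MonoidalPreadditive C] : Prop where
  essentiallySmall : EssentiallySmall.{v} C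
  invertible : ∀ g : C, ∃ g' : C, Nonempty (g ⊗ g' ≅ 𝟙_ C)
section IdealDef

variable (C : Type u) [Category.{v} C] [Preadditive C] [MonoidalCategory C]

/-- A *homogeneous ideal* of a graded commutative 2-ring: a family of subgroups
`I(g,h) ⊆ Hom(g,h)` closed under composition with arbitrary morphisms on either side
and under tensoring with arbitrary morphisms on either side. -/
structure HomIdeal where
  carrier : ∀ g h : C, AddSubgroup (g ⟶ h)
  comp_left : ∀ {g h h' : C} (r : g ⟶ h) (s : h ⟶ h'),
      r ∈ carrier g h → r ≫ s ∈ carrier g h'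
  comp_right : ∀ {g' g h : C} (t : g' ⟶ g) (r : g ⟶ h),
      r ∈ carrier g h → t ≫ r ∈ carrier g' h
  tensor_left : ∀ {g h g' h' : C} (s : g' ⟶ h') (r : g ⟶ h),
      r ∈ carrier g h → (s ⊗ₘ r) ∈ carrier (g' ⊗ g) (h' ⊗ h)
  tensor_right : ∀ {g h g' h' : C} (r : g ⟶ h) (s : g' ⟶ h'),
      r ∈ carrier g h → (r ⊗ₘ s) ∈ carrier (g ⊗ g') (h ⊗ h')

variable {C}

namespace HomIdeal

instance : PartialOrder (HomIdeal C) where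
  le I J := ∀ g h : C, I.carrier g h ≤ J.carrier g h
  le_refl I g h := le_rfl
  le_trans I J K h₁ h₂ g h := (h₁ g h).trans (h₂ g h)
  le_antisymm I J h₁ h₂ := by
    cases I; cases J
    congr
    funext g h
    exact le_antisymm (h₁ g h) (h₂ g h)

/-- A homogeneous ideal is *proper* if it contains no identity morphism. -/
def IsProper (I : HomIdeal C) : Prop := ∀ g : C, 𝟙 g ∉ I.carrier g g

/-- A proper homogeneous ideal is *prime* if whenever a composite belongs to it, one
of the factors belongs to it. -/
structure IsPrime (I : HomIdeal C) : Prop where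
  isProper : I.IsProper
  mem_or_mem : ∀ {g h l : C} (r : g ⟶ h) (s : h ⟶ l),
      r ≫ s ∈ I.carrier g l → r ∈ I.carrier g h ∨ s ∈ I.carrier h l

end HomIdeal

end IdealDef

set_option linter.unusedSectionVars false
set_option maxHeartbeats 800000

section Aux

variable {C : Type u} [Category.{v} C] [Preadditive C] [MonoidalCategory C]

/-- Fullness of tensoring on the right with an invertible object. -/
lemma tensorRight_full [SymmetricCategory C] {h h' : C} (e : h ⊗ h' ≅ 𝟙_ C)
    {x y : C} (w : x ⊗ h ⟶ y ⊗ h) : ∃ w' : x ⟶ y, w' ⊗ₘ 𝟙 h = w := by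
  let E : C ≌ C := CategoryTheory.Equivalence.mk (tensorRight h) (tensorRight h')
    (NatIso.ofComponents
      (fun z => (ρ_ z).symm ≪≫ (whiskerLeftIso z e).symm ≪≫ (α_ z h h').symm)
      (by intro a b f; dsimp; simp only [whiskerLeftIso_hom, Iso.symm_hom]; rw [rightUnitor_inv_naturality_assoc,
            ← whisker_exchange_assoc, associator_inv_naturality_left]; simp))
    (NatIso.ofComponents
      (fun z => α_ z h' h ≪≫ whiskerLeftIso z ((β_ h' h) ≪≫ e) ≪≫ ρ_ z)
      (by intro a b f; dsimp; simp only [whiskerLeftIso_hom, Iso.trans_hom]; rw [associator_naturality_left_assoc,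
            ← whisker_exchange_assoc]; simp))
  obtain ⟨w', hw'⟩ := E.fullyFaithfulFunctor.map_surjective (X := x) (Y := y)
    (show (tensorRight h).obj x ⟶ (tensorRight h).obj y from w)
  exact ⟨w', by rw [tensorHom_id]; exact hw'⟩

/-- Push membership in an additive closure through an additive map. -/
lemma mem_closure_map {M N : Type*} [AddGroup M] [AddGroup N] (φ : M →+ N)
    {s : Set M} {t : Set N} (hst : ∀ g ∈ s, φ g ∈ AddSubgroup.closure t)
    {f : M} (hf : f ∈ AddSubgroup.closure s) : φ f ∈ AddSubgroup.closure t := by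
  have h1 : φ f ∈ (AddSubgroup.closure s).map φ := AddSubgroup.mem_map_of_mem φ hf
  rw [AddMonoidHom.map_closure] at h1
  exact (AddSubgroup.closure_le _).mpr (by rintro _ ⟨g, hg, rfl⟩; exact hst g hg) h1

variable [SymmetricCategory C] [MonoidalPreadditive C]

/-- Generators of the ideal generated by `I` and `r`. -/
def genSet (I : HomIdeal C) {g₀ h₀ : C} (r : g₀ ⟶ h₀) (x y : C) : Set (x ⟶ y) :=
  {f | f ∈ I.carrier x y ∨ ∃ (a b : C) (c : a ⟶ b) (u : x ⟶ a ⊗ g₀) (v : b ⊗ h₀ ⟶ y),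
    f = u ≫ (c ⊗ₘ r) ≫ v}

variable (I : HomIdeal C) {g₀ h₀ : C} (r : g₀ ⟶ h₀)

lemma ext_compLeft {x y y' : C} (sm : y ⟶ y') {f : x ⟶ y}
    (hf : f ∈ AddSubgroup.closure (genSet I r x y)) :
    f ≫ sm ∈ AddSubgroup.closure (genSet I r x y') := by
  refine mem_closure_map (AddMonoidHom.mk' (fun q => q ≫ sm)
    (fun a b => Preadditive.add_comp _ _ _ _ _ _)) ?_ hf
  rintro q (hq | ⟨a, b, c, u, v, rfl⟩)
  · exact AddSubgroup.subset_closure (Or.inl (I.comp_left _ _ hq))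
  · exact AddSubgroup.subset_closure (Or.inr ⟨a, b, c, u, v ≫ sm, by simp⟩)

lemma ext_compRight {x' x y : C} (t : x' ⟶ x) {f : x ⟶ y}
    (hf : f ∈ AddSubgroup.closure (genSet I r x y)) :
    t ≫ f ∈ AddSubgroup.closure (genSet I r x' y) := by
  refine mem_closure_map (AddMonoidHom.mk' (fun q => t ≫ q)
    (fun a b => Preadditive.comp_add _ _ _ _ _ _)) ?_ hf
  rintro q (hq | ⟨a, b, c, u, v, rfl⟩)
  · exact AddSubgroup.subset_closure (Or.inl (I.comp_right _ _ hq))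
  · exact AddSubgroup.subset_closure (Or.inr ⟨a, b, c, t ≫ u, v, by simp⟩)

lemma ext_tensorLeft {x y g' h' : C} (sm : g' ⟶ h') {f : x ⟶ y}
    (hf : f ∈ AddSubgroup.closure (genSet I r x y)) :
    (sm ⊗ₘ f) ∈ AddSubgroup.closure (genSet I r (g' ⊗ x) (h' ⊗ y)) := by
  refine mem_closure_map (AddMonoidHom.mk' (fun q => sm ⊗ₘ q)
    (fun a b => MonoidalPreadditive.tensor_add _ _ _)) ?_ hf
  rintro q (hq | ⟨a, b, c, u, v, rfl⟩)
  · exact AddSubgroup.subset_closure (Or.inl (I.tensor_left _ _ hq))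
  · refine AddSubgroup.subset_closure (Or.inr ⟨h' ⊗ a, h' ⊗ b, 𝟙 h' ⊗ₘ c,
      (sm ⊗ₘ u) ≫ (α_ h' a g₀).inv, (α_ h' b h₀).hom ≫ (𝟙 h' ⊗ₘ v), ?_⟩)
    show sm ⊗ₘ (u ≫ (c ⊗ₘ r) ≫ v) = ((sm ⊗ₘ u) ≫ (α_ h' a g₀).inv) ≫ ((𝟙 h' ⊗ₘ c) ⊗ₘ r)
      ≫ ((α_ h' b h₀).hom ≫ (𝟙 h' ⊗ₘ v))
    have h1 : sm ⊗ₘ (u ≫ (c ⊗ₘ r) ≫ v)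
        = (sm ⊗ₘ u) ≫ (𝟙 h' ⊗ₘ (c ⊗ₘ r)) ≫ (𝟙 h' ⊗ₘ v) := by
      rw [tensorHom_comp_tensorHom, tensorHom_comp_tensorHom]; simp
    have h2 : (𝟙 h' ⊗ₘ (c ⊗ₘ r)) = (α_ h' a g₀).inv ≫ ((𝟙 h' ⊗ₘ c) ⊗ₘ r) ≫ (α_ h' b h₀).hom := by
      rw [← associator_inv_naturality_assoc]; simp
    rw [h1, h2]; simp only [Category.assoc]
  
lemma ext_tensorRight {x y g' h' : C} (sm : g' ⟶ h') {f : x ⟶ y}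
    (hf : f ∈ AddSubgroup.closure (genSet I r x y)) :
    (f ⊗ₘ sm) ∈ AddSubgroup.closure (genSet I r (x ⊗ g') (y ⊗ h')) := by
  have key : f ⊗ₘ sm = (β_ x g').hom ≫ (sm ⊗ₘ f) ≫ (β_ y h').inv := by
    rw [← BraidedCategory.braiding_naturality_assoc]; simp
  rw [key]
  exact ext_compRight I r _ (ext_compLeft I r _ (ext_tensorLeft I r sm hf))

/-- The homogeneous ideal generated by `I` and `r`. -/
def extIdeal : HomIdeal C where
  carrier x y := AddSubgroup.closure (genSet I r x y)
  comp_left _ sm hf := ext_compLeft I r sm hf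
  comp_right t _ hf := ext_compRight I r t hf
  tensor_left sm _ hf := ext_tensorLeft I r sm hf
  tensor_right _ sm hf := ext_tensorRight I r sm hf

lemma le_extIdeal : I ≤ extIdeal I r :=
  fun _ _ _ hf => AddSubgroup.subset_closure (Or.inl hf)

lemma self_mem_extIdeal : r ∈ (extIdeal I r).carrier g₀ h₀ := by
  refine AddSubgroup.subset_closure (Or.inr ⟨𝟙_ C, 𝟙_ C, 𝟙 (𝟙_ C),
    (λ_ g₀).inv, (λ_ h₀).hom, ?_⟩)
  simp [id_tensorHom]

/-- Key multiplication lemma: the composite of the ideal generated by `I, r` and the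
ideal generated by `I, s` lands in `I` whenever `r ≫ s ∈ I`. -/
lemma extIdeal_comp_mem {l₀ : C} (s : h₀ ⟶ l₀) (hrs : r ≫ s ∈ I.carrier g₀ l₀)
    (full : ∀ {x y : C} (w : x ⊗ h₀ ⟶ y ⊗ h₀), ∃ w' : x ⟶ y, w' ⊗ₘ 𝟙 h₀ = w)
    {x y z : C} {f : x ⟶ y} {f' : y ⟶ z}
    (hf : f ∈ AddSubgroup.closure (genSet I r x y))
    (hf' : f' ∈ AddSubgroup.closure (genSet I s y z)) :
    f ≫ f' ∈ I.carrier x z := by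
  induction hf using AddSubgroup.closure_induction with
  | mem q hq =>
    rcases hq with hq | ⟨a, b, c, u, v, rfl⟩
    · exact I.comp_left _ _ hq
    · -- inner induction on f'
      induction hf' using AddSubgroup.closure_induction with
      | mem q' hq' =>
        rcases hq' with hq' | ⟨a', b', c', u', v', rfl⟩
        · exact I.comp_right _ _ hq'
        · obtain ⟨w', hw'⟩ := full (v ≫ u')
          have key : (u ≫ (c ⊗ₘ r) ≫ v) ≫ u' ≫ (c' ⊗ₘ s) ≫ v'
              = u ≫ (((c ≫ w' ≫ c') ⊗ₘ (r ≫ s)) ≫ v') := by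
            have : (c ⊗ₘ r) ≫ ((v ≫ u') ≫ (c' ⊗ₘ s)) = (c ≫ w' ≫ c') ⊗ₘ (r ≫ s) := by
              rw [← hw', tensorHom_comp_tensorHom, tensorHom_comp_tensorHom]; simp
            simp only [Category.assoc] at this ⊢
            rw [← this]
            simp only [Category.assoc]
          rw [key]
          exact I.comp_right _ _ (I.comp_left _ _ (I.tensor_left _ _ hrs))
      | zero => simp only [comp_zero]; exact zero_mem _
      | add q' q'' _ _ hq' hq'' => rw [Preadditive.comp_add]; exact add_mem hq' hq''
      | neg q' _ hq' => rw [Preadditive.comp_neg]; exact neg_mem hq'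
  | zero => simp only [zero_comp]; exact zero_mem _
  | add q q' _ _ hq hq' => rw [Preadditive.add_comp]; exact add_mem hq hq'
  | neg q _ hq => rw [Preadditive.neg_comp]; exact neg_mem hq

end Aux

section Main

variable {C : Type u} [Category.{v} C] [Preadditive C] [MonoidalCategory C]
    [SymmetricCategory C] [MonoidalPreadditive C]

/-- Union of a nonempty chain of homogeneous ideals. -/
def unionIdeal (c : Set (HomIdeal C)) (hc : IsChain (· ≤ ·) c)
    (J₀ : HomIdeal C) (hJ₀ : J₀ ∈ c) : HomIdeal C where
  carrier x y :=
    { carrier := {f | ∃ J ∈ c, f ∈ J.carrier x y}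
      zero_mem' := ⟨J₀, hJ₀, zero_mem _⟩
      add_mem' := by
        rintro f g ⟨J, hJ, hf⟩ ⟨K, hK, hg⟩
        rcases hc.total hJ hK with hle | hle
        · exact ⟨K, hK, add_mem (hle _ _ hf) hg⟩
        · exact ⟨J, hJ, add_mem hf (hle _ _ hg)⟩
      neg_mem' := by rintro f ⟨J, hJ, hf⟩; exact ⟨J, hJ, neg_mem hf⟩ }
  comp_left := by rintro g h h' f sm ⟨J, hJ, hf⟩; exact ⟨J, hJ, J.comp_left _ _ hf⟩
  comp_right := by rintro g' g h t f ⟨J, hJ, hf⟩; exact ⟨J, hJ, J.comp_right _ _ hf⟩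
  tensor_left := by rintro g h g' h' sm f ⟨J, hJ, hf⟩; exact ⟨J, hJ, J.tensor_left _ _ hf⟩
  tensor_right := by rintro g h g' h' f sm ⟨J, hJ, hf⟩; exact ⟨J, hJ, J.tensor_right _ _ hf⟩

variable [GradedComm2Ring C]

lemma isPrime_of_maximal (I : HomIdeal C) (hp : I.IsProper)
    (hmax : ∀ J : HomIdeal C, J.IsProper → I ≤ J → J = I) : I.IsPrime := by
  refine ⟨hp, ?_⟩
  intro g h l r s hrs
  by_contra hcon
  push_neg at hcon
  obtain ⟨hr, hs⟩ := hcon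
  -- both extensions are improper
  have himp : ∀ {g' h' : C} (q : g' ⟶ h'), q ∉ I.carrier g' h' →
      ∃ a : C, 𝟙 a ∈ (extIdeal I q).carrier a a := by
    intro g' h' q hq
    by_contra hcon'
    push_neg at hcon'
    have heq : extIdeal I q = I := hmax _ (fun a ha => hcon' a ha) (le_extIdeal I q)
    have := self_mem_extIdeal I q
    rw [heq] at this
    exact hq this
  obtain ⟨a, ha⟩ := himp r hr
  obtain ⟨b, hb⟩ := himp s hs
  have h1 : 𝟙 (a ⊗ b) ∈ (extIdeal I r).carrier (a ⊗ b) (a ⊗ b) := by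
    have := (extIdeal I r).tensor_right (𝟙 a) (𝟙 b) ha
    rwa [id_tensorHom_id] at this
  have h2 : 𝟙 (a ⊗ b) ∈ (extIdeal I s).carrier (a ⊗ b) (a ⊗ b) := by
    have := (extIdeal I s).tensor_left (𝟙 a) (𝟙 b) hb
    rwa [id_tensorHom_id] at this
  obtain ⟨h', ⟨e⟩⟩ := GradedComm2Ring.invertible h
  have key := extIdeal_comp_mem I r s hrs (fun w => tensorRight_full e w) h1 h2
  rw [Category.comp_id] at key
  exact hp (a ⊗ b) key

theorem maximal_isPrime_and_le_prime' :
    (∀ I : HomIdeal C, I.IsProper →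
      (∀ J : HomIdeal C, J.IsProper → I ≤ J → J = I) → I.IsPrime) ∧
    (∀ I : HomIdeal C, I.IsProper → ∃ p : HomIdeal C, p.IsPrime ∧ I ≤ p) := by
  constructor
  · exact fun I hI hmax => isPrime_of_maximal I hI hmax
  · intro I hI
    set S : Set (HomIdeal C) := {J | J.IsProper ∧ I ≤ J} with hS
    have hchain : ∀ c ⊆ S, IsChain (· ≤ ·) c → ∀ y ∈ c,
        ∃ ub ∈ S, ∀ z ∈ c, z ≤ ub := by
      intro c hcS hc y hy
      refine ⟨unionIdeal c hc y hy, ⟨?_, ?_⟩, ?_⟩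
      · intro g hg
        obtain ⟨J, hJ, hgJ⟩ := hg
        exact (hcS hJ).1 g hgJ
      · exact fun g h f hf => ⟨y, hy, (hcS hy).2 g h hf⟩
      · exact fun J hJ g h f hf => ⟨J, hJ, hf⟩
    obtain ⟨m, hIm, hmS, hmaxle⟩ := zorn_le_nonempty₀ S hchain I ⟨hI, le_rfl⟩
    refine ⟨m, ?_, hmS.2⟩
    refine isPrime_of_maximal m hmS.1 ?_
    intro J hJ hmJ
    exact le_antisymm (hmaxle ⟨hJ, hmS.2.trans hmJ⟩ hmJ) hmJ

end Main


/-- **Statement 8.** In a graded commutative 2-ring, every maximal element of the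
poset of proper homogeneous ideals is prime, and every proper homogeneous ideal is
contained in some prime homogeneous ideal. -/
theorem maximal_isPrime_and_le_prime
    {C : Type u} [Category.{v} C] [Preadditive C] [MonoidalCategory C]
    [SymmetricCategory C] [MonoidalPreadditive C] [GradedComm2Ring C] :
    (∀ I : HomIdeal C, I.IsProper →
      (∀ J : HomIdeal C, J.IsProper → I ≤ J → J = I) → I.IsPrime) ∧
    (∀ I : HomIdeal C, I.IsProper → ∃ p : HomIdeal C, p.IsPrime ∧ I ≤ p) := by
  exact maximal_isPrime_and_le_prime'
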